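/- A pair of quadratic polynomials (α₀ + α₁x + α₂x²/2, β₀ + β₁x + β₂x²/2) with α₀ ≠ 0, β₀ ≠ 0 lies in the fat Bethe cell, i.e., equals (d₁b₁, d₂·Wr(b₁,b₂)) for some basis-type pair b₁ = 1+ax+bx²/2, b₂ = x+cx²/2 and nonzero scalars d₁,d₂, if and only if the Plücker relation α₁β₁ = α₀β₂ + α₂β₀ holds. -/

import Mathlib

open Polynomial

noncomputable def Wr (f g : Polynomial ℂ) : Polynomial ℂ :=
  f * derivative g - derivative f * g

lemma Wr_eval (a b c : ℂ) :
    Wr (1 + C a * X + C (b / 2) * X ^ 2) (X + C (c / 2) * X ^ 2) =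
      1 + C c * X + C ((a * c - b) / 2) * X ^ 2 := by
  unfold Wr
  have e1 : (C c : ℂ[X]) = 2 * C (c/2) := by
    rw [show (2:ℂ[X]) = C 2 from (map_ofNat C 2).symm, ← C_mul]
    congr 1; ring
  have e2 : (C ((a*c-b)/2) : ℂ[X]) = C a * C (c/2) - C (b/2) := by
    rw [← C_mul, ← C_sub]; congr 1; ring
  rw [e1, e2]
  simp only [derivative_add, derivative_one, derivative_X, derivative_C_mul,
    derivative_X_pow, Nat.cast_ofNat, map_ofNat]
  ring

lemma scale (d p q : ℂ) :
    C d * (1 + C p * X + C q * X ^ 2) = C d + C (d * p) * X + C (d * q) * X ^ 2 := by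
  rw [C_mul, C_mul]; ring

lemma quad_eq {p q r p' q' r' : ℂ}
    (h : C p + C q * X + C r * X ^ 2 = C p' + C q' * X + C r' * X ^ 2) :
    p = p' ∧ q = q' ∧ r = r' := by
  refine ⟨?_, ?_, ?_⟩
  · have := congrArg (fun f => coeff f 0) h
    simpa [coeff_X_pow] using this
  · have := congrArg (fun f => coeff f 1) h
    simpa [coeff_X_pow] using this
  · have := congrArg (fun f => coeff f 2) h
    simpa [coeff_X_pow] using this

theorem stmt19 (α₀ α₁ α₂ β₀ β₁ β₂ : ℂ) (hα : α₀ ≠ 0) (hβ : β₀ ≠ 0) :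
    (∃ a b c d₁ d₂ : ℂ, d₁ ≠ 0 ∧ d₂ ≠ 0 ∧
        C α₀ + C α₁ * X + C (α₂ / 2) * X ^ 2 =
          C d₁ * (1 + C a * X + C (b / 2) * X ^ 2) ∧
        C β₀ + C β₁ * X + C (β₂ / 2) * X ^ 2 =
          C d₂ * Wr (1 + C a * X + C (b / 2) * X ^ 2) (X + C (c / 2) * X ^ 2)) ↔
      α₁ * β₁ = α₀ * β₂ + α₂ * β₀ := by
  constructor
  · rintro ⟨a, b, c, d₁, d₂, hd₁, hd₂, h1, h2⟩
    rw [scale] at h1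
    rw [Wr_eval, scale] at h2
    obtain ⟨e0, e1, e2⟩ := quad_eq h1
    obtain ⟨f0, f1, f2⟩ := quad_eq h2
    have hα₂ : α₂ = d₁ * b := by linear_combination 2 * e2
    have hβ₂ : β₂ = d₂ * (a * c - b) := by linear_combination 2 * f2
    subst e0 e1 f0 f1 hα₂ hβ₂
    ring
  · intro h
    refine ⟨α₁ / α₀, α₂ / α₀, β₁ / β₀, α₀, β₀, hα, hβ, ?_, ?_⟩
    · rw [scale]
      have e1 : α₀ * (α₁ / α₀) = α₁ := by field_simp
      have e2 : α₀ * (α₂ / α₀ / 2) = α₂ / 2 := by field_simp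
      rw [e1, e2]
    · rw [Wr_eval, scale]
      have e1 : β₀ * (β₁ / β₀) = β₁ := by field_simp
      have e2 : β₀ * ((α₁ / α₀ * (β₁ / β₀) - α₂ / α₀) / 2) = β₂ / 2 := by
        field_simp
        linear_combination h
      rw [e1, e2]
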